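/- Let S be a unital commutative semigroup with involution * and f : S → ℂ a positive semidefinite function. Then the function s ↦ R_s := sup_{n≥1} (f(sⁿ(s*)ⁿ))^{1/(2n)}, when finite for all s, is an absolute value on S: R_1 = 1, R_{st} ≤ R_s R_t, and R_{s*} = R_s; moreover |f(s)| ≤ R_s for all s ∈ S. -/

import Mathlib

open Complex

/-- The set of values `f(sⁿ(s*)ⁿ)^{1/(2n)}`, `n ≥ 1`. -/
def Rset {S : Type*} [CommMonoid S] [StarMul S] (f : S → ℂ) (s : S) : Set ℝ :=
  {x : ℝ | ∃ n : ℕ, 1 ≤ n ∧ x = (f (s ^ n * (star s) ^ n)).re ^ (((2 * n : ℕ) : ℝ))⁻¹}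

section Aux

variable {S : Type*} [CommMonoid S] [StarMul S]

/-- Positive semidefiniteness hypothesis, packaged. -/
def PSDaux (f : S → ℂ) : Prop :=
  ∀ (n : ℕ) (s : Fin n → S) (c : Fin n → ℂ),
      ∃ r : ℝ, 0 ≤ r ∧
        (∑ j, ∑ k, c j * (starRingEnd ℂ) (c k) * f (star (s j) * s k)) = (r : ℂ)

lemma psd_pair {f : S → ℂ} (hpsd : PSDaux f) (x y : S) (c1 c2 : ℂ) :
    ∃ r : ℝ, 0 ≤ r ∧
      c1 * (starRingEnd ℂ) c1 * f (star x * x) + c1 * (starRingEnd ℂ) c2 * f (star x * y)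
      + c2 * (starRingEnd ℂ) c1 * f (star y * x) + c2 * (starRingEnd ℂ) c2 * f (star y * y) = (r : ℂ) := by
  obtain ⟨r, hr, h⟩ := hpsd 2 ![x, y] ![c1, c2]
  refine ⟨r, hr, ?_⟩
  rw [← h]
  simp [Fin.sum_univ_two]
  ring

lemma psd_single {f : S → ℂ} (hpsd : PSDaux f) (x : S) :
    ∃ r : ℝ, 0 ≤ r ∧ f (star x * x) = (r : ℂ) := by
  obtain ⟨r, hr, h⟩ := hpsd 1 ![x] ![1]
  refine ⟨r, hr, ?_⟩
  rw [← h]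
  simp

lemma psd_re_nonneg {f : S → ℂ} (hpsd : PSDaux f) (x : S) :
    0 ≤ (f (star x * x)).re ∧ f (star x * x) = ((f (star x * x)).re : ℂ) := by
  obtain ⟨r, hr, h⟩ := psd_single hpsd x
  rw [h]; simpa using hr

lemma psd_conj_symm {f : S → ℂ} (hpsd : PSDaux f) (x y : S) :
    f (star y * x) = (starRingEnd ℂ) (f (star x * y)) := by
  obtain ⟨r1, _, h1⟩ := psd_pair hpsd x y 1 1
  obtain ⟨r2, _, h2⟩ := psd_pair hpsd x y Complex.I 1
  obtain ⟨a, ha, hA⟩ := psd_single hpsd x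
  obtain ⟨d, hd, hD⟩ := psd_single hpsd y
  rw [hA, hD] at h1 h2
  simp only [map_one, one_mul, mul_one, Complex.conj_I] at h1 h2
  have e1 : (f (star x * y)).im + (f (star y * x)).im = 0 := by
    have := congrArg Complex.im h1; simpa using this
  have e2 : (f (star x * y)).re - (f (star y * x)).re = 0 := by
    have := congrArg Complex.im h2
    simp [Complex.add_im, Complex.mul_im] at this
    linarith
  apply Complex.ext
  · simp [Complex.conj_re]; linarith
  · simp [Complex.conj_im]; linarith

lemma psd_cs {f : S → ℂ} (hpsd : PSDaux f) (x y : S) :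
    Complex.normSq (f (star x * y)) ≤ (f (star x * x)).re * (f (star y * y)).re := by
  obtain ⟨a, ha, hA⟩ := psd_single hpsd x
  obtain ⟨d, hd, hD⟩ := psd_single hpsd y
  set B := f (star x * y) with hB
  have key : ∀ t : ℝ, 0 ≤ Complex.normSq B * a - 2 * t * Complex.normSq B + t ^ 2 * d := by
    intro t
    obtain ⟨r, hr, h⟩ := psd_pair hpsd x y ((starRingEnd ℂ) B) (-(t : ℂ))
    rw [hA, hD, psd_conj_symm hpsd x y, ← hB] at h
    have h' : ((Complex.normSq B * a - 2 * t * Complex.normSq B + t ^ 2 * d : ℝ) : ℂ) = (r : ℂ) := by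
      rw [← h]
      simp only [Complex.conj_conj, map_neg, Complex.conj_ofReal]
      push_cast
      rw [Complex.normSq_eq_conj_mul_self]
      ring
    have := Complex.ofReal_inj.mp h'
    linarith [hr, this.ge.trans_eq rfl]
  set n2 := Complex.normSq B with hn2
  have hn2n : 0 ≤ n2 := Complex.normSq_nonneg B
  have hre : (f (star x * x)).re = a := by rw [hA]; simp
  have hre' : (f (star y * y)).re = d := by rw [hD]; simp
  rw [hre, hre']
  by_cases ha0 : a = 0
  · subst ha0
    have hk := key (n2 / (d + 1))
    have hd1 : (0:ℝ) < d + 1 := by linarith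
    have : n2 = 0 := by
      by_contra hne
      have hn2p : 0 < n2 := lt_of_le_of_ne hn2n (Ne.symm hne)
      have hx : (0:ℝ) ≤ (n2 * 0 - 2 * (n2 / (d + 1)) * n2 + (n2 / (d + 1)) ^ 2 * d) * ((d + 1) ^ 2) :=
        mul_nonneg hk (by positivity)
      have hx' : (n2 * 0 - 2 * (n2 / (d + 1)) * n2 + (n2 / (d + 1)) ^ 2 * d) * ((d + 1) ^ 2)
          = n2 ^ 2 * d - 2 * n2 ^ 2 * (d + 1) := by
        field_simp
        ring
      rw [hx'] at hx
      nlinarith [mul_pos hn2p hn2p]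
    rw [this]; positivity
  · have ha' : 0 < a := lt_of_le_of_ne ha (Ne.symm ha0)
    have hk := key a
    nlinarith

lemma pow_star_eq (s : S) (n : ℕ) : s ^ n * (star s) ^ n = star (s ^ n) * s ^ n := by
  rw [star_pow, mul_comm]

lemma an_nonneg {f : S → ℂ} (hpsd : PSDaux f) (s : S) (n : ℕ) :
    0 ≤ (f (s ^ n * (star s) ^ n)).re := by
  rw [pow_star_eq]
  exact (psd_re_nonneg hpsd _).1

lemma mem_Rset (f : S → ℂ) (s : S) (n : ℕ) (hn : 1 ≤ n) :
    (f (s ^ n * (star s) ^ n)).re ^ (((2 * n : ℕ) : ℝ))⁻¹ ∈ Rset f s := ⟨n, hn, rfl⟩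

lemma Rsup_nonneg {f : S → ℂ} (hpsd : PSDaux f) (hfin : ∀ s : S, BddAbove (Rset f s)) (s : S) :
    0 ≤ sSup (Rset f s) := by
  have hmem := mem_Rset f s 1 le_rfl
  have h0 : (0:ℝ) ≤ (f (s ^ 1 * (star s) ^ 1)).re ^ (((2 * 1 : ℕ) : ℝ))⁻¹ :=
    Real.rpow_nonneg (an_nonneg hpsd s 1) _
  exact h0.trans (le_csSup (hfin s) hmem)

end Aux

theorem stmt_17 {S : Type*} [CommMonoid S] [StarMul S]
    (f : S → ℂ) (hnorm : f 1 = 1)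
    (hpsd : ∀ (n : ℕ) (s : Fin n → S) (c : Fin n → ℂ),
      ∃ r : ℝ, 0 ≤ r ∧
        (∑ j, ∑ k, c j * (starRingEnd ℂ) (c k) * f (star (s j) * s k)) = (r : ℂ))
    (hfin : ∀ s : S, BddAbove (Rset f s)) :
    sSup (Rset f 1) = 1 ∧
      (∀ s t : S, sSup (Rset f (s * t)) ≤ sSup (Rset f s) * sSup (Rset f t)) ∧
      (∀ s : S, sSup (Rset f (star s)) = sSup (Rset f s)) ∧
      (∀ s : S, ‖f s‖ ≤ sSup (Rset f s)) := by
  have hP : PSDaux f := hpsd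
  refine ⟨?_, ?_, ?_, ?_⟩
  · -- R_1 = 1
    have hset : Rset f 1 = {1} := by
      ext x
      simp only [Rset, Set.mem_setOf_eq, Set.mem_singleton_iff]
      constructor
      · rintro ⟨n, hn, rfl⟩
        simp [hnorm, Real.one_rpow]
      · rintro rfl
        exact ⟨1, le_rfl, by simp [hnorm, Real.one_rpow]⟩
    rw [hset, csSup_singleton]
  · -- submultiplicative
    intro s t
    have hRs := Rsup_nonneg hP hfin s
    have hRt := Rsup_nonneg hP hfin t
    apply csSup_le ⟨_, mem_Rset f (s * t) 1 le_rfl⟩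
    rintro x ⟨n, hn, rfl⟩
    set A := (f ((s * t) ^ n * (star (s * t)) ^ n)).re with hAdef
    set Bs := (f (s ^ (2 * n) * (star s) ^ (2 * n))).re with hBsdef
    set Bt := (f (t ^ (2 * n) * (star t) ^ (2 * n))).re with hBtdef
    have hA0 : 0 ≤ A := an_nonneg hP (s * t) n
    have hBs0 : 0 ≤ Bs := an_nonneg hP s (2 * n)
    have hBt0 : 0 ≤ Bt := an_nonneg hP t (2 * n)
    -- the Cauchy–Schwarz step
    have hsq : A ^ 2 ≤ Bs * Bt := by
      have hcs := psd_cs hP (s ^ n * (star s) ^ n) (t ^ n * (star t) ^ n)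
      have e1 : star (s ^ n * (star s) ^ n) * (t ^ n * (star t) ^ n)
          = (s * t) ^ n * (star (s * t)) ^ n := by
        simp only [star_mul', star_pow, star_star, mul_pow]
        simp [mul_comm, mul_left_comm, mul_assoc]
      have e2 : star (s ^ n * (star s) ^ n) * (s ^ n * (star s) ^ n)
          = s ^ (2 * n) * (star s) ^ (2 * n) := by
        simp only [star_mul', star_pow, star_star, two_mul, pow_add]
        simp [mul_comm, mul_left_comm, mul_assoc]
      have e3 : star (t ^ n * (star t) ^ n) * (t ^ n * (star t) ^ n)
          = t ^ (2 * n) * (star t) ^ (2 * n) := by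
        simp only [star_mul', star_pow, star_star, two_mul, pow_add]
        simp [mul_comm, mul_left_comm, mul_assoc]
      rw [e1, e2, e3] at hcs
      -- f ((s*t)^n * (star (s*t))^n) is real so its normSq is A^2
      have hreal : f ((s * t) ^ n * (star (s * t)) ^ n) = (A : ℂ) := by
        rw [hAdef, pow_star_eq]
        exact (psd_re_nonneg hP _).2
      calc A ^ 2 = Complex.normSq ((A : ℂ)) := by rw [Complex.normSq_ofReal]; ring
        _ = Complex.normSq (f ((s * t) ^ n * (star (s * t)) ^ n)) := by rw [hreal]
        _ ≤ Bs * Bt := hcs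
    -- now the rpow manipulation
    have hnpos : (0:ℝ) < ((2 * n : ℕ) : ℝ) := by
      have : 0 < n := hn
      positivity
    set e : ℝ := (((2 * n : ℕ) : ℝ))⁻¹ with hedef
    have he0 : 0 ≤ e := by positivity
    have step1 : A ^ e = (A ^ (2:ℕ)) ^ (e / 2) := by
      rw [← Real.rpow_natCast A 2, ← Real.rpow_mul hA0]
      congr 1
      ring
    have step2 : (A ^ (2:ℕ)) ^ (e / 2) ≤ (Bs * Bt) ^ (e / 2) :=
      Real.rpow_le_rpow (by positivity) (by exact_mod_cast hsq) (by positivity)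
    have step3 : (Bs * Bt) ^ (e / 2) = Bs ^ (e / 2) * Bt ^ (e / 2) :=
      Real.mul_rpow hBs0 hBt0
    have hexp : e / 2 = (((2 * (2 * n) : ℕ) : ℝ))⁻¹ := by
      rw [hedef]
      push_cast
      rw [div_eq_mul_inv, ← mul_inv]
      ring_nf
    have hBsle : Bs ^ (e / 2) ≤ sSup (Rset f s) := by
      rw [hexp]
      exact le_csSup (hfin s) (mem_Rset f s (2 * n) (by omega))
    have hBtle : Bt ^ (e / 2) ≤ sSup (Rset f t) := by
      rw [hexp]
      exact le_csSup (hfin t) (mem_Rset f t (2 * n) (by omega))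
    calc A ^ e = (A ^ (2:ℕ)) ^ (e / 2) := step1
      _ ≤ (Bs * Bt) ^ (e / 2) := step2
      _ = Bs ^ (e / 2) * Bt ^ (e / 2) := step3
      _ ≤ sSup (Rset f s) * sSup (Rset f t) :=
          mul_le_mul hBsle hBtle (Real.rpow_nonneg hBt0 _) hRs
  · -- invariance under star
    intro s
    have : Rset f (star s) = Rset f s := by
      ext x
      simp only [Rset, Set.mem_setOf_eq]
      constructor
      · rintro ⟨n, hn, rfl⟩
        exact ⟨n, hn, by rw [star_star, mul_comm]⟩
      · rintro ⟨n, hn, rfl⟩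
        exact ⟨n, hn, by rw [star_star, mul_comm]⟩
    rw [this]
  · -- |f s| ≤ R_s
    intro s
    have hcs := psd_cs hP 1 s
    rw [star_one, one_mul, mul_one] at hcs
    rw [hnorm] at hcs
    simp only [Complex.one_re, one_mul] at hcs
    -- hcs : normSq (f s) ≤ (f (star s * s)).re
    set A1 := (f (s ^ 1 * (star s) ^ 1)).re with hA1def
    have hA1 : (f (star s * s)).re = A1 := by
      rw [hA1def, pow_one, pow_one, mul_comm]
    rw [hA1] at hcs
    have hA10 : 0 ≤ A1 := an_nonneg hP s 1
    have habs : ‖f s‖ ^ (2:ℕ) ≤ A1 := by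
      rw [Complex.sq_norm]; exact hcs
    have hle : ‖f s‖ ≤ A1 ^ (((2 * 1 : ℕ) : ℝ))⁻¹ := by
      have h2 : ((2 * 1 : ℕ) : ℝ) = ((2:ℕ):ℝ) := by norm_num
      rw [h2]
      calc ‖f s‖
          = ((‖f s‖) ^ (2:ℕ)) ^ (((2:ℕ):ℝ))⁻¹ := by
            rw [Real.pow_rpow_inv_natCast (norm_nonneg _) (by norm_num)]
        _ ≤ A1 ^ (((2:ℕ):ℝ))⁻¹ :=
            Real.rpow_le_rpow (by positivity) habs (by positivity)
    exact hle.trans (le_csSup (hfin s) (mem_Rset f s 1 le_rfl))
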